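/- Consider a continuous convex smooth game in which every player i runs OptDA with a regularizer h_i on X_i and the adaptive learning rate. If the game is variationally stable, then for every player i the sum Σ_{t=1}^{∞} ‖g_t^i − g_{t−1}^i‖² is finite; equivalently, the learning rate sequence (η_t^i)_{t≥1} converges to a finite limit as t → ∞. -/

import Mathlib

open scoped RealInnerProductSpace
open Filter Finset Topology

noncomputable section

/-- Bregman divergence of a regularizer `h` with gradient map `Gh`. -/
def breg {F : Type*} [NormedAddCommGroup F] [InnerProductSpace ℝ F]
    (h : F → ℝ) (Gh : F → F) (p x : F) : ℝ :=
  h p - h x - ⟪Gh x, p - x⟫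

/-- `h` is a regularizer on `X`: a convex differentiable function with gradient map `Gh`
that is `1`-strongly convex on `X`. -/
structure IsRegularizer {F : Type*} [NormedAddCommGroup F] [InnerProductSpace ℝ F]
    (X : Set F) (h : F → ℝ) (Gh : F → F) : Prop where
  convex : ConvexOn ℝ Set.univ h
  grad : ∀ x : F, HasFDerivAt h (innerSL ℝ (Gh x)) x
  strong : StrongConvexOn X 1 h

/-- The adaptive learning rate `η_t = √(1 + ∑_{s=1}^{t-1} ‖g_s - g_{s-1}‖²)`. -/
def adaEta {F : Type*} [NormedAddCommGroup F] [InnerProductSpace ℝ F]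
    (g : ℕ → F) (t : ℕ) : ℝ :=
  Real.sqrt (1 + ∑ s ∈ Finset.Ico 1 t, ‖g s - g (s - 1)‖ ^ 2)

/-- OptDA iterates: `Z t` is the base state `X_t` and `W t` is the played action `X_{t+1/2}`,
for feedback `g` (with `g 0 = 0`) and positive nondecreasing learning rates `η`. -/
structure IsOptDA {F : Type*} [NormedAddCommGroup F] [InnerProductSpace ℝ F]
    (X : Set F) (h : F → ℝ) (Gh : F → F)
    (η : ℕ → ℝ) (g : ℕ → F) (Z W : ℕ → F) : Prop where
  g_zero : g 0 = 0
  eta_pos : ∀ t : ℕ, 1 ≤ t → 0 < η t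
  eta_mono : ∀ t : ℕ, 1 ≤ t → η t ≤ η (t + 1)
  base_mem : ∀ t : ℕ, 1 ≤ t → Z t ∈ X
  lead_mem : ∀ t : ℕ, 1 ≤ t → W t ∈ X
  base_min : ∀ t : ℕ, 1 ≤ t → ∀ p ∈ X,
    ⟪∑ s ∈ Finset.Ico 1 t, g s, Z t⟫ + η t * h (Z t)
      ≤ ⟪∑ s ∈ Finset.Ico 1 t, g s, p⟫ + η t * h p
  lead_min : ∀ t : ℕ, 1 ≤ t → ∀ p ∈ X,
    ⟪g (t - 1), W t⟫ + η t * breg h Gh (W t) (Z t)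
      ≤ ⟪g (t - 1), p⟫ + η t * breg h Gh p (Z t)

section AuxLemmas
variable {F : Type*} [NormedAddCommGroup F] [InnerProductSpace ℝ F]

lemma slope_le' (f : F → ℝ) (f' : F →L[ℝ] ℝ) (x v : F) (hf : HasFDerivAt f f' x)
    (c c₂ : ℝ) (hb : ∀ θ : ℝ, θ ∈ Set.Ioc (0:ℝ) 1 → f (x + θ • v) ≤ f x + θ * c + θ^2 * c₂) :
    f' v ≤ c := by
  have hline : HasDerivAt (fun θ : ℝ => x + θ • v) v 0 := by
    simpa using ((hasDerivAt_id (0:ℝ)).smul_const v).const_add x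
  have hψ : HasDerivAt (fun θ : ℝ => f (x + θ • v)) (f' v) 0 := by
    have hf' : HasFDerivAt f f' (x + (0:ℝ) • v) := by simpa using hf
    have := hf'.comp_hasDerivAt (0:ℝ) hline
    exact this
  have hslope := hasDerivAt_iff_tendsto_slope.mp hψ
  have hslope' : Tendsto (slope (fun θ : ℝ => f (x + θ • v)) 0) (𝓝[>] 0) (𝓝 (f' v)) :=
    hslope.mono_left (nhdsWithin_mono 0 (fun y hy => ne_of_gt hy))
  have hrhs : Tendsto (fun θ : ℝ => c + θ * c₂) (𝓝[>] (0:ℝ)) (𝓝 c) := by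
    have : Tendsto (fun θ : ℝ => c + θ * c₂) (𝓝 (0:ℝ)) (𝓝 (c + 0 * c₂)) :=
      (continuous_const.add (continuous_id.mul continuous_const)).tendsto 0
    simpa using this.mono_left nhdsWithin_le_nhds
  refine le_of_tendsto_of_tendsto hslope' hrhs ?_
  filter_upwards [Ioo_mem_nhdsGT_of_mem (Set.left_mem_Ico.2 one_pos)] with θ hθ
  have hθ0 : (0:ℝ) < θ := hθ.1
  have hb' := hb θ ⟨hθ.1, hθ.2.le⟩
  have hs : slope (fun θ : ℝ => f (x + θ • v)) 0 θ = (f (x + θ • v) - f (x + (0:ℝ) • v)) / θ := by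
    simp [slope_def_field]
  rw [hs, div_le_iff₀ hθ0]
  simp only [zero_smul, add_zero] at hb' ⊢
  nlinarith [hb']

lemma min_fo (X : Set F) (hX : Convex ℝ X) (f : F → ℝ) (f' : F →L[ℝ] ℝ) (z : F) (hz : z ∈ X)
    (hf : HasFDerivAt f f' z) (hmin : ∀ p ∈ X, f z ≤ f p) :
    ∀ p ∈ X, 0 ≤ f' (p - z) := by
  intro p hp
  have h := slope_le' (fun y => -f y) (-f') z (p - z) hf.neg 0 0 ?_
  · simpa using h
  · intro θ hθ
    have hmem : z + θ • (p - z) ∈ X := hX.add_smul_sub_mem hz hp ⟨hθ.1.le, hθ.2⟩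
    have := hmin _ hmem
    nlinarith [this]

lemma strong_breg {X : Set F} {h : F → ℝ} {Gh : F → F} (hreg : IsRegularizer X h Gh)
    {x p : F} (hx : x ∈ X) (hp : p ∈ X) : 1/2 * ‖p - x‖^2 ≤ breg h Gh p x := by
  have key : ⟪Gh x, p - x⟫ ≤ (h p - h x - 1/2 * ‖p-x‖^2) := by
    have := slope_le' h (innerSL ℝ (Gh x)) x (p - x) (hreg.grad x)
      (h p - h x - 1/2 * ‖p-x‖^2) (1/2 * ‖p-x‖^2) ?_
    · simpa using this
    · intro θ hθ
      have hsc := hreg.strong.2 hx hp (show (0:ℝ) ≤ 1 - θ by linarith [hθ.2]) hθ.1.le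
        (show (1:ℝ) - θ + θ = 1 by ring)
      have hxe : (1-θ) • x + θ • p = x + θ • (p - x) := by
        rw [smul_sub]; module
      rw [hxe] at hsc
      have hn : ‖x - p‖ = ‖p - x‖ := norm_sub_rev x p
      rw [hn] at hsc
      simp only [smul_eq_mul] at hsc
      nlinarith [hsc]
  simp only [breg]
  linarith [key]

lemma breg_three (h : F → ℝ) (Gh : F → F) (x y z : F) :
    ⟪Gh y - Gh x, z - y⟫ = breg h Gh z x - breg h Gh z y - breg h Gh y x := by
  simp only [breg, inner_sub_left, inner_sub_right]
  ring

section Player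

variable {X : Set F} {h : F → ℝ} {Gh : F → F} {η : ℕ → ℝ} {g : ℕ → F} {Z W : ℕ → F}

/-- The dual-averaging energy function. -/
def enrg (h : F → ℝ) (η : ℕ → ℝ) (g Z : ℕ → F) (xs : F) (t : ℕ) : ℝ :=
  ⟪∑ s ∈ Finset.Ico 1 t, g s, xs - Z t⟫ + η t * (h xs - h (Z t))

lemma enrg_nonneg (hod : IsOptDA X h Gh η g Z W) {xs : F} (hxs : xs ∈ X)
    {t : ℕ} (ht : 1 ≤ t) : 0 ≤ enrg h η g Z xs t := by
  have := hod.base_min t ht xs hxs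
  simp only [enrg, inner_sub_right]
  linarith [this]

lemma hZ1min (hod : IsOptDA X h Gh η g Z W) : ∀ p ∈ X, h (Z 1) ≤ h p := by
  intro p hp
  have := hod.base_min 1 le_rfl p hp
  simp only [Finset.Ico_self, Finset.sum_empty, inner_zero_left, zero_add] at this
  exact le_of_mul_le_mul_left this (hod.eta_pos 1 le_rfl)

lemma opt_Z (hX : Convex ℝ X) (hreg : IsRegularizer X h Gh) (hod : IsOptDA X h Gh η g Z W)
    {t : ℕ} (ht : 1 ≤ t) : ∀ p ∈ X,
    0 ≤ ⟪∑ s ∈ Finset.Ico 1 t, g s, p - Z t⟫ + η t * ⟪Gh (Z t), p - Z t⟫ := by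
  intro p hp
  have hf : HasFDerivAt (fun q => ⟪∑ s ∈ Finset.Ico 1 t, g s, q⟫ + η t * h q)
      (innerSL ℝ (∑ s ∈ Finset.Ico 1 t, g s) + η t • innerSL ℝ (Gh (Z t))) (Z t) :=
    ((innerSL ℝ (∑ s ∈ Finset.Ico 1 t, g s)).hasFDerivAt).add
      ((hreg.grad (Z t)).const_mul (η t))
  have := min_fo X hX _ _ (Z t) (hod.base_mem t ht) hf
    (fun q hq => hod.base_min t ht q hq) p hp
  simpa [innerSL_apply_apply, sum_inner] using this

lemma opt_W (hX : Convex ℝ X) (hreg : IsRegularizer X h Gh) (hod : IsOptDA X h Gh η g Z W)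
    {t : ℕ} (ht : 1 ≤ t) : ∀ p ∈ X,
    0 ≤ ⟪g (t-1), p - W t⟫ + η t * ⟪Gh (W t) - Gh (Z t), p - W t⟫ := by
  intro p hp
  have h1 : HasFDerivAt (fun q => h q - h (Z t) - (⟪Gh (Z t), q⟫ - ⟪Gh (Z t), Z t⟫))
      (innerSL ℝ (Gh (W t)) - innerSL ℝ (Gh (Z t))) (W t) :=
    ((hreg.grad (W t)).sub_const (h (Z t))).sub
      (((innerSL ℝ (Gh (Z t))).hasFDerivAt).sub_const _)
  have hf : HasFDerivAt
      (fun q => ⟪g (t-1), q⟫ + η t * (h q - h (Z t) - (⟪Gh (Z t), q⟫ - ⟪Gh (Z t), Z t⟫)))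
      (innerSL ℝ (g (t-1)) + η t • (innerSL ℝ (Gh (W t)) - innerSL ℝ (Gh (Z t)))) (W t) :=
    ((innerSL ℝ (g (t-1))).hasFDerivAt).add (h1.const_mul (η t))
  have hmin : ∀ q ∈ X,
      (fun q => ⟪g (t-1), q⟫ + η t * (h q - h (Z t) - (⟪Gh (Z t), q⟫ - ⟪Gh (Z t), Z t⟫))) (W t)
      ≤ (fun q => ⟪g (t-1), q⟫ + η t * (h q - h (Z t) - (⟪Gh (Z t), q⟫ - ⟪Gh (Z t), Z t⟫))) q := by
    intro q hq
    have := hod.lead_min t ht q hq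
    simpa [breg, inner_sub_right] using this
  have := min_fo X hX _ _ (W t) (hod.lead_mem t ht) hf hmin p hp
  simpa [innerSL_apply_apply, inner_sub_left] using this

end Player
section Step
variable {X : Set F} {h : F → ℝ} {Gh : F → F} {η : ℕ → ℝ} {g : ℕ → F} {Z W : ℕ → F}

lemma step (hX : Convex ℝ X) (hreg : IsRegularizer X h Gh) (hod : IsOptDA X h Gh η g Z W)
    {xs : F} (hxs : xs ∈ X) {t : ℕ} (ht : 1 ≤ t) :
    η t/2 * ‖W t - Z t‖^2 + η t/4 * ‖Z (t+1) - W t‖^2 + ⟪g t, W t - xs⟫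
      ≤ enrg h η g Z xs t - enrg h η g Z xs (t+1)
        + (η (t+1) - η t) * (h xs - h (Z 1)) + ‖g t - g (t-1)‖^2 / η t := by
  have hZt := hod.base_mem t ht
  have hWt := hod.lead_mem t ht
  have hZt1 := hod.base_mem (t+1) (by omega)
  have hepos := hod.eta_pos t ht
  have hemono := hod.eta_mono t ht
  have F1 := opt_Z hX hreg hod ht (Z (t+1)) hZt1
  have F2 := opt_W hX hreg hod ht (Z (t+1)) hZt1
  have three := breg_three h Gh (Z t) (W t) (Z (t+1))
  have three' : η t * ⟪Gh (W t) - Gh (Z t), Z (t+1) - W t⟫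
      = η t * breg h Gh (Z (t+1)) (Z t) - η t * breg h Gh (Z (t+1)) (W t)
        - η t * breg h Gh (W t) (Z t) := by rw [three]; ring
  have m1 : η t * (1/2 * ‖W t - Z t‖^2) ≤ η t * breg h Gh (W t) (Z t) :=
    mul_le_mul_of_nonneg_left (strong_breg hreg hZt hWt) hepos.le
  have m2 : η t * (1/2 * ‖Z (t+1) - W t‖^2) ≤ η t * breg h Gh (Z (t+1)) (W t) :=
    mul_le_mul_of_nonneg_left (strong_breg hreg hWt hZt1) hepos.le
  have hmin1 : h (Z 1) ≤ h (Z (t+1)) := hZ1min hod _ hZt1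
  have h6 : (η (t+1) - η t) * (h xs - h (Z (t+1))) ≤ (η (t+1) - η t) * (h xs - h (Z 1)) :=
    mul_le_mul_of_nonneg_left (by linarith) (by linarith)
  have young : ⟪g t - g (t-1), W t - Z (t+1)⟫
      ≤ ‖g t - g (t-1)‖^2 / η t + η t/4 * ‖Z (t+1) - W t‖^2 := by
    have h1 := real_inner_le_norm (g t - g (t-1)) (W t - Z (t+1))
    have h2 : ‖W t - Z (t+1)‖ = ‖Z (t+1) - W t‖ := norm_sub_rev _ _
    rw [h2] at h1
    rw [show ‖g t - g (t-1)‖^2 / η t + η t/4 * ‖Z (t+1) - W t‖^2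
        = (‖g t - g (t-1)‖^2 + (η t)^2/4 * ‖Z (t+1) - W t‖^2) / η t by field_simp,
      le_div_iff₀ hepos]
    nlinarith [h1, sq_nonneg (‖g t - g (t-1)‖ - η t/2 * ‖Z (t+1) - W t‖), hepos]
  -- expand the feedback sum
  have hsum : ∑ s ∈ Finset.Ico 1 (t+1), g s = (∑ s ∈ Finset.Ico 1 t, g s) + g t :=
    Finset.sum_Ico_succ_top ht g
  -- expand everything and finish linearly
  simp only [enrg, hsum, breg, inner_add_left, inner_sub_left, inner_sub_right] at *
  linarith [F1, F2, three', m1, m2, h6, young]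

end Step

section Summed
variable {X : Set F} {h : F → ℝ} {Gh : F → F} {η : ℕ → ℝ} {g : ℕ → F} {Z W : ℕ → F}

lemma telesc (T : ℕ) (f : ℕ → ℝ) :
    ∑ t ∈ Finset.Ico 1 (T+1), (f t - f (t+1)) = f 1 - f (T+1) := by
  rw [Finset.sum_Ico_eq_sum_range]
  simp only [Nat.add_sub_cancel]
  have := Finset.sum_range_sub' (fun k => f (k+1)) T
  simpa [add_comm] using this

lemma summed (hX : Convex ℝ X) (hreg : IsRegularizer X h Gh) (hod : IsOptDA X h Gh η g Z W)
    {xs : F} (hxs : xs ∈ X) (T : ℕ) :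
    ∑ t ∈ Finset.Ico 1 (T+1),
        (η t/2 * ‖W t - Z t‖^2 + η t/4 * ‖Z (t+1) - W t‖^2 + ⟪g t, W t - xs⟫)
      ≤ η (T+1) * (h xs - h (Z 1))
        + ∑ t ∈ Finset.Ico 1 (T+1), ‖g t - g (t-1)‖^2 / η t := by
  have hstep : ∀ t ∈ Finset.Ico 1 (T+1),
      η t/2 * ‖W t - Z t‖^2 + η t/4 * ‖Z (t+1) - W t‖^2 + ⟪g t, W t - xs⟫
        ≤ (enrg h η g Z xs t - enrg h η g Z xs (t+1))
          + ((η (t+1) - η t) * (h xs - h (Z 1)) + ‖g t - g (t-1)‖^2 / η t) := by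
    intro t htm
    have := step hX hreg hod hxs (Finset.mem_Ico.1 htm).1
    linarith [this]
  have htel2 : ∑ t ∈ Finset.Ico 1 (T+1), (η (t+1) - η t) = η (T+1) - η 1 := by
    have := telesc T (fun t => -η t)
    simp only [neg_sub_neg] at this
    linarith [this]
  have he1 : enrg h η g Z xs 1 = η 1 * (h xs - h (Z 1)) := by simp [enrg]
  have he2 : 0 ≤ enrg h η g Z xs (T+1) := enrg_nonneg hod hxs (by omega)
  calc ∑ t ∈ Finset.Ico 1 (T+1),
        (η t/2 * ‖W t - Z t‖^2 + η t/4 * ‖Z (t+1) - W t‖^2 + ⟪g t, W t - xs⟫)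
      ≤ ∑ t ∈ Finset.Ico 1 (T+1),
        ((enrg h η g Z xs t - enrg h η g Z xs (t+1))
          + ((η (t+1) - η t) * (h xs - h (Z 1)) + ‖g t - g (t-1)‖^2 / η t)) :=
        Finset.sum_le_sum hstep
    _ = (enrg h η g Z xs 1 - enrg h η g Z xs (T+1))
          + ((η (T+1) - η 1) * (h xs - h (Z 1))
            + ∑ t ∈ Finset.Ico 1 (T+1), ‖g t - g (t-1)‖^2 / η t) := by
        rw [Finset.sum_add_distrib, telesc T (enrg h η g Z xs), Finset.sum_add_distrib,
          ← Finset.sum_mul, htel2]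
    _ ≤ η (T+1) * (h xs - h (Z 1))
          + ∑ t ∈ Finset.Ico 1 (T+1), ‖g t - g (t-1)‖^2 / η t := by
        rw [he1]; nlinarith [he2]

end Summed

lemma sqrt_add_le' (x y : ℝ) (hx : 0 ≤ x) (hy : 0 ≤ y) :
    Real.sqrt (x + y) ≤ Real.sqrt x + Real.sqrt y := by
  have h1 := Real.sq_sqrt hx
  have h2 := Real.sq_sqrt hy
  have h3 := Real.sqrt_nonneg x
  have h4 := Real.sqrt_nonneg y
  have h5 : Real.sqrt (x+y) ≤ Real.sqrt ((Real.sqrt x + Real.sqrt y)^2) :=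
    Real.sqrt_le_sqrt (by nlinarith)
  rwa [Real.sqrt_sq (by positivity)] at h5

lemma young2 (ε x y : ℝ) (hε : 0 < ε) : x * y ≤ ε * x^2 + y^2/(4*ε) := by
  rw [← sub_nonneg]
  have : ε * x^2 + y^2/(4*ε) - x*y = (2*ε*x - y)^2/(4*ε) := by field_simp; ring
  rw [this]; positivity

lemma sq_norm_sub_le' {F : Type*} [NormedAddCommGroup F] (u v w : F) :
    ‖u - w‖^2 ≤ 2*‖u - v‖^2 + 2*‖v - w‖^2 := by
  have h1 : ‖u - w‖ ≤ ‖u - v‖ + ‖v - w‖ := by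
    have := norm_add_le (u - v) (v - w)
    simpa using this
  have h2 : ‖u - w‖^2 ≤ (‖u - v‖ + ‖v - w‖)^2 := by
    have := pow_le_pow_left₀ (norm_nonneg (u - w)) h1 2
    simpa using this
  nlinarith [h2, sq_nonneg (‖u - v‖ - ‖v - w‖)]

end AuxLemmas

variable {ι : Type*} [Fintype ι] [DecidableEq ι] {E : ι → Type*}
  [∀ i, NormedAddCommGroup (E i)] [∀ i, InnerProductSpace ℝ (E i)]
  [∀ i, FiniteDimensional ℝ (E i)]

/-- The profile of actions played at round `t`, as a point of the joint space `PiLp 2 E`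
(whose norm is the product norm `‖x‖ = √(∑ j ‖x j‖²)`). -/
def profileAt (W : ∀ i, ℕ → E i) (t : ℕ) : PiLp 2 E := WithLp.toLp 2 fun j => W j t

/-- A continuous convex smooth game: each player `i` has a nonempty closed convex action set
`X i`, a continuous loss `L i` convex in the `i`-th variable, and a Lipschitz continuous map
`V i` selecting subgradients of `L i` in the `i`-th variable on the joint action space. -/
structure ConvexGame (X : ∀ i, Set (E i)) (L : ι → PiLp 2 E → ℝ)
    (V : ∀ i, PiLp 2 E → E i) : Prop where
  nonempty : ∀ i, (X i).Nonempty
  closed : ∀ i, IsClosed (X i)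
  convexSet : ∀ i, Convex ℝ (X i)
  contLoss : ∀ i, Continuous (L i)
  convexLoss : ∀ i, ∀ x : PiLp 2 E,
    ConvexOn ℝ Set.univ fun p : E i => L i (WithLp.toLp 2 (Function.update x i p))
  lipschitzV : ∀ i, ∃ K : NNReal, LipschitzWith K (V i)
  subgrad : ∀ i, ∀ x : PiLp 2 E, (∀ j, x j ∈ X j) → ∀ p ∈ X i,
    L i x + ⟪V i x, p - x i⟫ ≤ L i (WithLp.toLp 2 (Function.update x i p))

/-- `x` is a Nash equilibrium of the game. -/
def IsNashEq (X : ∀ i, Set (E i)) (L : ι → PiLp 2 E → ℝ) (x : PiLp 2 E) : Prop :=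
  (∀ i, x i ∈ X i) ∧ ∀ i, ∀ p ∈ X i, L i x ≤ L i (WithLp.toLp 2 (Function.update x i p))

/-- The game is variationally stable. -/
def VarStable (X : ∀ i, Set (E i)) (L : ι → PiLp 2 E → ℝ)
    (V : ∀ i, PiLp 2 E → E i) : Prop :=
  (∃ xs : PiLp 2 E, IsNashEq X L xs) ∧
    ∀ x : PiLp 2 E, (∀ j, x j ∈ X j) → ∀ xs : PiLp 2 E, IsNashEq X L xs →
      0 ≤ ∑ i, ⟪V i x, x i - xs i⟫

/-- Every player `i` runs OptDA with regularizer `h i` and the adaptive learning rate,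
the feedback being the individual gradient `V i` evaluated at the realized profile. -/
structure AllOptDA (X : ∀ i, Set (E i)) (V : ∀ i, PiLp 2 E → E i)
    (h : ∀ i, E i → ℝ) (Gh : ∀ i, E i → E i)
    (η : ∀ i, ℕ → ℝ) (g : ∀ i, ℕ → E i) (Z W : ∀ i, ℕ → E i) : Prop where
  reg : ∀ i, IsRegularizer (X i) (h i) (Gh i)
  g_zero : ∀ i, g i 0 = 0
  feedback : ∀ i, ∀ t : ℕ, 1 ≤ t → g i t = V i (profileAt W t)
  rate : ∀ i t, η i t = adaEta (g i) t
  run : ∀ i, IsOptDA (X i) (h i) (Gh i) (η i) (g i) (Z i) (W i)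

set_option maxHeartbeats 2000000

/-- Lemma 4: in a variationally stable game where all players run OptDA with the adaptive
learning rate, each player's gradient-increment sum is finite and the learning rate
converges to a finite limit. -/
theorem increments_summable_eta_converges
    (X : ∀ i, Set (E i)) (L : ι → PiLp 2 E → ℝ) (V : ∀ i, PiLp 2 E → E i)
    (game : ConvexGame X L V) (hvs : VarStable X L V)
    (h : ∀ i, E i → ℝ) (Gh : ∀ i, E i → E i)
    (η : ∀ i, ℕ → ℝ) (g : ∀ i, ℕ → E i) (Z W : ∀ i, ℕ → E i)
    (setup : AllOptDA X V h Gh η g Z W) :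
    ∀ i, (Summable fun t : ℕ => ‖g i t - g i (t - 1)‖ ^ 2) ∧
      ∃ c : ℝ, Tendsto (fun t : ℕ => η i t) atTop (𝓝 c) := by
  intro i0
  classical
  obtain ⟨xs, hNash⟩ := hvs.1
  have hxsX : ∀ j, xs j ∈ X j := hNash.1
  choose K hK using game.lipschitzV
  set N : ℝ := (Fintype.card ι : ℝ) with hNdef
  have hN : 0 < N := by
    have h0 : 0 < Fintype.card ι := Fintype.card_pos_iff.mpr ⟨i0⟩
    rw [hNdef]
    exact_mod_cast h0
  have etaOne : ∀ (i : ι) (t : ℕ), 1 ≤ η i t := by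
    intro i t
    rw [setup.rate i t]
    have h0 : (0:ℝ) ≤ ∑ s ∈ Finset.Ico 1 t, ‖g i s - g i (s-1)‖^2 := by positivity
    have h1 := Real.sqrt_le_sqrt
      (show (1:ℝ) ≤ 1 + ∑ s ∈ Finset.Ico 1 t, ‖g i s - g i (s-1)‖^2 by linarith)
    rw [Real.sqrt_one] at h1
    exact h1
  have etaPos : ∀ (i : ι) (t : ℕ), (0:ℝ) < η i t :=
    fun i t => lt_of_lt_of_le one_pos (etaOne i t)
  have etaMonoAll : ∀ (i : ι) {s t : ℕ}, s ≤ t → η i s ≤ η i t := by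
    intro i s t hst
    rw [setup.rate i s, setup.rate i t]
    apply Real.sqrt_le_sqrt
    have := Finset.sum_le_sum_of_subset_of_nonneg
      (Finset.Ico_subset_Ico le_rfl (hst) : Finset.Ico 1 s ⊆ Finset.Ico 1 t)
      (fun u _ _ => by positivity : ∀ u ∈ Finset.Ico 1 t, u ∉ Finset.Ico 1 s →
        (0:ℝ) ≤ ‖g i u - g i (u-1)‖^2)
    linarith
  have etaSq : ∀ (i : ι) (t : ℕ),
      (η i t)^2 = 1 + ∑ s ∈ Finset.Ico 1 t, ‖g i s - g i (s-1)‖^2 := by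
    intro i t
    rw [setup.rate i t]
    exact Real.sq_sqrt (by positivity)
  set A : ℕ → ℝ := fun T => ∑ t ∈ Finset.Ico 1 (T+1),
      ∑ j, (‖W j t - Z j t‖^2 + ‖Z j (t+1) - W j t‖^2) with hAdef
  have hA0 : ∀ T, 0 ≤ A T := by
    intro T; rw [hAdef]; positivity
  have master : ∀ T : ℕ, A T / 4 ≤ ∑ i, (h i (xs i) - h i (Z i 1)) * η i (T+1)
      + ∑ i, ∑ t ∈ Finset.Ico 1 (T+1), ‖g i t - g i (t-1)‖^2 / η i t := by
    intro T
    have hper : ∀ i : ι,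
        ∑ t ∈ Finset.Ico 1 (T+1), ((1/4) * (‖W i t - Z i t‖^2 + ‖Z i (t+1) - W i t‖^2)
            + ⟪g i t, W i t - xs i⟫)
        ≤ (h i (xs i) - h i (Z i 1)) * η i (T+1)
            + ∑ t ∈ Finset.Ico 1 (T+1), ‖g i t - g i (t-1)‖^2 / η i t := by
      intro i
      have hs := summed (game.convexSet i) (setup.reg i) (setup.run i) (hxsX i) T
      have hlow : ∀ t ∈ Finset.Ico 1 (T+1),
          (1/4) * (‖W i t - Z i t‖^2 + ‖Z i (t+1) - W i t‖^2) + ⟪g i t, W i t - xs i⟫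
          ≤ η i t/2 * ‖W i t - Z i t‖^2 + η i t/4 * ‖Z i (t+1) - W i t‖^2
            + ⟪g i t, W i t - xs i⟫ := by
        intro t _
        have h1 := etaOne i t
        nlinarith [sq_nonneg ‖W i t - Z i t‖, sq_nonneg ‖Z i (t+1) - W i t‖]
      have htr := (Finset.sum_le_sum hlow).trans hs
      nlinarith [htr]
    have hVS : ∀ t ∈ Finset.Ico 1 (T+1), (0:ℝ) ≤ ∑ i, ⟪g i t, W i t - xs i⟫ := by
      intro t htm
      have ht1 : 1 ≤ t := (Finset.mem_Ico.1 htm).1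
      have hmem : ∀ j, profileAt W t j ∈ X j := fun j => (setup.run j).lead_mem t ht1
      have h0 := hvs.2 (profileAt W t) hmem xs hNash
      have heq : ∑ i, ⟪V i (profileAt W t), profileAt W t i - xs i⟫
          = ∑ i, ⟪g i t, W i t - xs i⟫ := by
        refine Finset.sum_congr rfl (fun i _ => ?_)
        rw [setup.feedback i t ht1]
        rfl
      rw [heq] at h0
      exact h0
    have hsumI := Finset.sum_le_sum (fun i (_ : i ∈ (Finset.univ : Finset ι)) => hper i)
    have hL : ∑ i, ∑ t ∈ Finset.Ico 1 (T+1),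
          ((1/4) * (‖W i t - Z i t‖^2 + ‖Z i (t+1) - W i t‖^2) + ⟪g i t, W i t - xs i⟫)
        = A T / 4 + ∑ t ∈ Finset.Ico 1 (T+1), ∑ i, ⟪g i t, W i t - xs i⟫ := by
      rw [Finset.sum_comm]
      simp only [Finset.sum_add_distrib]
      congr 1
      simp only [hAdef]
      rw [Finset.sum_div]
      refine Finset.sum_congr rfl (fun t _ => ?_)
      rw [← Finset.mul_sum]
      ring
    rw [hL, Finset.sum_add_distrib] at hsumI
    have hp0 : 0 ≤ ∑ t ∈ Finset.Ico 1 (T+1), ∑ i, ⟪g i t, W i t - xs i⟫ :=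
      Finset.sum_nonneg hVS
    linarith [hsumI, hp0]
  have hbsum : ∀ T : ℕ, ∑ t ∈ Finset.Ico 2 (T+1), ∑ j, ‖Z j t - W j (t-1)‖^2 ≤ A T := by
    intro T
    have hre : ∑ t ∈ Finset.Ico 2 (T+1), ∑ j, ‖Z j t - W j (t-1)‖^2
        = ∑ t ∈ Finset.Ico 1 T, ∑ j, ‖Z j (t+1) - W j t‖^2 := by
      rw [Finset.sum_Ico_eq_sum_range, Finset.sum_Ico_eq_sum_range]
      rw [show T + 1 - 2 = T - 1 by omega]
      refine Finset.sum_congr rfl (fun k _ => ?_)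
      rw [show 2 + k - 1 = 1 + k by omega, show 2 + k = (1 + k) + 1 by omega]
    rw [hre]
    simp only [hAdef]
    calc ∑ t ∈ Finset.Ico 1 T, ∑ j, ‖Z j (t+1) - W j t‖^2
        ≤ ∑ t ∈ Finset.Ico 1 (T+1), ∑ j, ‖Z j (t+1) - W j t‖^2 :=
          Finset.sum_le_sum_of_subset_of_nonneg
            (Finset.Ico_subset_Ico le_rfl (by omega)) (fun u _ _ => by positivity)
      _ ≤ ∑ t ∈ Finset.Ico 1 (T+1), ∑ j, (‖W j t - Z j t‖^2 + ‖Z j (t+1) - W j t‖^2) :=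
          Finset.sum_le_sum (fun t _ => Finset.sum_le_sum
            (fun j _ => le_add_of_nonneg_left (by positivity)))
  have hdelta : ∀ (i : ι) (t : ℕ), 2 ≤ t →
      ‖g i t - g i (t-1)‖^2 ≤ 2*(K i:ℝ)^2 * ∑ j, (‖W j t - Z j t‖^2 + ‖Z j t - W j (t-1)‖^2) := by
    intro i t ht2
    have hgt : g i t = V i (profileAt W t) := setup.feedback i t (by omega)
    have hgt' : g i (t-1) = V i (profileAt W (t-1)) := setup.feedback i (t-1) (by omega)
    have hlip := (hK i).dist_le_mul (profileAt W t) (profileAt W (t-1))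
    rw [dist_eq_norm, dist_eq_norm] at hlip
    have h1 : ‖g i t - g i (t-1)‖ ≤ (K i : ℝ) * ‖profileAt W t - profileAt W (t-1)‖ := by
      rw [hgt, hgt']; exact hlip
    have h2 : ‖profileAt W t - profileAt W (t-1)‖^2 = ∑ j, ‖W j t - W j (t-1)‖^2 := by
      rw [PiLp.norm_sq_eq_of_L2]
      rfl
    have h4 : ‖profileAt W t - profileAt W (t-1)‖^2
        ≤ 2 * ∑ j, (‖W j t - Z j t‖^2 + ‖Z j t - W j (t-1)‖^2) := by
      rw [h2, Finset.mul_sum]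
      exact Finset.sum_le_sum (fun j _ => by
        have := sq_norm_sub_le' (W j t) (Z j t) (W j (t-1))
        linarith)
    have h5 : ‖g i t - g i (t-1)‖^2 ≤ (K i:ℝ)^2 * ‖profileAt W t - profileAt W (t-1)‖^2 := by
      nlinarith [norm_nonneg (g i t - g i (t-1)),
        norm_nonneg (profileAt W t - profileAt W (t-1)), h1, NNReal.coe_nonneg (K i)]
    have h6 := mul_le_mul_of_nonneg_left h4 (by positivity : (0:ℝ) ≤ (K i:ℝ)^2)
    nlinarith [h5, h6]
  have hSbound : ∀ (i : ι) (T : ℕ),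
      ∑ t ∈ Finset.Ico 1 (T+1), ‖g i t - g i (t-1)‖^2 ≤ ‖g i 1‖^2 + 4*(K i:ℝ)^2 * A T := by
    intro i T
    rcases Nat.eq_zero_or_pos T with rfl | hT
    · simp only [zero_add, Finset.Ico_self, Finset.sum_empty]
      exact add_nonneg (by positivity) (mul_nonneg (by positivity) (hA0 0))
    · rw [Finset.sum_eq_sum_Ico_succ_bot (by omega : 1 < T+1)]
      have hfirst : ‖g i 1 - g i (1-1)‖^2 = ‖g i 1‖^2 := by
        simp [(setup.run i).g_zero]
      rw [hfirst]
      have htail : ∑ t ∈ Finset.Ico 2 (T+1), ‖g i t - g i (t-1)‖^2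
          ≤ 2*(K i:ℝ)^2 * (∑ t ∈ Finset.Ico 2 (T+1),
              ∑ j, (‖W j t - Z j t‖^2 + ‖Z j t - W j (t-1)‖^2)) := by
        rw [Finset.mul_sum]
        exact Finset.sum_le_sum (fun t htm => hdelta i t (Finset.mem_Ico.1 htm).1)
      have hsplit : ∑ t ∈ Finset.Ico 2 (T+1), ∑ j, (‖W j t - Z j t‖^2 + ‖Z j t - W j (t-1)‖^2)
          = ∑ t ∈ Finset.Ico 2 (T+1), ∑ j, ‖W j t - Z j t‖^2
            + ∑ t ∈ Finset.Ico 2 (T+1), ∑ j, ‖Z j t - W j (t-1)‖^2 := by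
        rw [← Finset.sum_add_distrib]
        exact Finset.sum_congr rfl (fun t _ => Finset.sum_add_distrib)
      have ha : ∑ t ∈ Finset.Ico 2 (T+1), ∑ j, ‖W j t - Z j t‖^2 ≤ A T := by
        simp only [hAdef]
        calc ∑ t ∈ Finset.Ico 2 (T+1), ∑ j, ‖W j t - Z j t‖^2
            ≤ ∑ t ∈ Finset.Ico 1 (T+1), ∑ j, ‖W j t - Z j t‖^2 :=
              Finset.sum_le_sum_of_subset_of_nonneg
                (Finset.Ico_subset_Ico (by omega) le_rfl) (fun u _ _ => by positivity)
          _ ≤ ∑ t ∈ Finset.Ico 1 (T+1), ∑ j, (‖W j t - Z j t‖^2 + ‖Z j (t+1) - W j t‖^2) :=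
              Finset.sum_le_sum (fun t _ => Finset.sum_le_sum
                (fun j _ => le_add_of_nonneg_right (by positivity)))
      have hb := hbsum T
      have hcomb := mul_le_mul_of_nonneg_left
        (by linarith [ha, hb] : ∑ t ∈ Finset.Ico 2 (T+1),
            ∑ j, (‖W j t - Z j t‖^2 + ‖Z j t - W j (t-1)‖^2) ≤ A T + A T)
        (by positivity : (0:ℝ) ≤ 2*(K i:ℝ)^2)
      rw [hsplit] at hcomb
      nlinarith [htail, hcomb]
  have hetaB : ∀ (i : ι) (T : ℕ),
      η i (T+1) ≤ Real.sqrt (1 + ‖g i 1‖^2) + 2*(K i:ℝ)*Real.sqrt (A T) := by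
    intro i T
    rw [setup.rate i (T+1)]
    have h1 : adaEta (g i) (T+1) = Real.sqrt (1 + ∑ t ∈ Finset.Ico 1 (T+1), ‖g i t - g i (t-1)‖^2) := rfl
    rw [h1]
    have h2 : (1:ℝ) + ∑ t ∈ Finset.Ico 1 (T+1), ‖g i t - g i (t-1)‖^2
        ≤ (1 + ‖g i 1‖^2) + 4*(K i:ℝ)^2 * A T := by
      linarith [hSbound i T]
    calc Real.sqrt (1 + ∑ t ∈ Finset.Ico 1 (T+1), ‖g i t - g i (t-1)‖^2)
        ≤ Real.sqrt ((1 + ‖g i 1‖^2) + 4*(K i:ℝ)^2 * A T) := Real.sqrt_le_sqrt h2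
      _ ≤ Real.sqrt (1 + ‖g i 1‖^2) + Real.sqrt (4*(K i:ℝ)^2 * A T) :=
          sqrt_add_le' _ _ (by positivity) (mul_nonneg (by positivity) (hA0 T))
      _ = Real.sqrt (1 + ‖g i 1‖^2) + 2*(K i:ℝ)*Real.sqrt (A T) := by
          rw [show 4*(K i:ℝ)^2 * A T = (2*(K i:ℝ))^2 * A T by ring,
            Real.sqrt_mul (by positivity), Real.sqrt_sq (by positivity)]
  have hC0 : ∀ i : ι, 0 ≤ h i (xs i) - h i (Z i 1) := by
    intro i
    have := hZ1min (setup.run i) (xs i) (hxsX i)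
    linarith
  have hdich : ∀ i : ι, ∃ M : ℝ, 0 ≤ M ∧ ∀ T : ℕ,
      ∑ t ∈ Finset.Ico 1 (T+1), ‖g i t - g i (t-1)‖^2 / η i t ≤ M + A T/(16*N) := by
    intro i
    have hdiv : ∀ (T : ℕ), ∀ t ∈ Finset.Ico 1 (T+1),
        ‖g i t - g i (t-1)‖^2 / η i t ≤ ‖g i t - g i (t-1)‖^2 :=
      fun T t _ => div_le_self (by positivity) (etaOne i t)
    have hAdiv : ∀ T, 0 ≤ A T/(16*N) := fun T => div_nonneg (hA0 T) (by positivity)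
    by_cases hb : ∃ Mb : ℝ, ∀ T : ℕ, ∑ t ∈ Finset.Ico 1 (T+1), ‖g i t - g i (t-1)‖^2 ≤ Mb
    · obtain ⟨Mb, hMb⟩ := hb
      refine ⟨max Mb 0, le_max_right _ _, fun T => ?_⟩
      have h1 : ∑ t ∈ Finset.Ico 1 (T+1), ‖g i t - g i (t-1)‖^2 / η i t
          ≤ ∑ t ∈ Finset.Ico 1 (T+1), ‖g i t - g i (t-1)‖^2 :=
        Finset.sum_le_sum (hdiv T)
      have := hAdiv T
      have := le_max_left Mb (0:ℝ)
      linarith [hMb T]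
    · push_neg at hb
      set R : ℝ := 64*N*(K i:ℝ)^2 + 1 with hRdef
      have hR1 : (1:ℝ) ≤ R := by
        have : (0:ℝ) ≤ 64*N*(K i:ℝ)^2 := by positivity
        simp only [hRdef]; linarith
      obtain ⟨T₁, hT₁⟩ := hb (R^2)
      set T₀ : ℕ := max (T₁+1) 2 with hT₀def
      have hT₀2 : 2 ≤ T₀ := le_max_right _ _
      have hetaT₀ : ∀ t : ℕ, T₀ ≤ t → R ≤ η i t := by
        intro t htt
        have h1 : (η i (T₁+1))^2 = 1 + ∑ s ∈ Finset.Ico 1 (T₁+1), ‖g i s - g i (s-1)‖^2 :=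
          etaSq i (T₁+1)
        have h2 : R^2 < (η i (T₁+1))^2 := by rw [h1]; linarith [hT₁]
        have h3 : R ≤ η i (T₁+1) := by nlinarith [etaPos i (T₁+1), h2, hR1]
        exact h3.trans (etaMonoAll i (le_trans (le_max_left _ _) htt))
      refine ⟨∑ t ∈ Finset.Ico 1 T₀, ‖g i t - g i (t-1)‖^2, by positivity, fun T => ?_⟩
      by_cases hTT : T₀ ≤ T+1
      · rw [← Finset.sum_Ico_consecutive (fun t => ‖g i t - g i (t-1)‖^2 / η i t)
          (by omega : 1 ≤ T₀) hTT]
        have hhead : ∑ t ∈ Finset.Ico 1 T₀, ‖g i t - g i (t-1)‖^2 / η i t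
            ≤ ∑ t ∈ Finset.Ico 1 T₀, ‖g i t - g i (t-1)‖^2 :=
          Finset.sum_le_sum (fun t _ => div_le_self (by positivity) (etaOne i t))
        have htails : ∀ t ∈ Finset.Ico T₀ (T+1),
            ‖g i t - g i (t-1)‖^2 / η i t
            ≤ (1/(32*N)) * ∑ j, (‖W j t - Z j t‖^2 + ‖Z j t - W j (t-1)‖^2) := by
          intro t htm
          obtain ⟨htl, htr⟩ := Finset.mem_Ico.1 htm
          have ht2 : 2 ≤ t := le_trans hT₀2 htl
          have hδ := hdelta i t ht2
          have hRle := hetaT₀ t htl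
          have hRpos : (0:ℝ) < R := lt_of_lt_of_le one_pos hR1
          have h1 : ‖g i t - g i (t-1)‖^2 / η i t ≤ ‖g i t - g i (t-1)‖^2 / R :=
            div_le_div_of_nonneg_left (by positivity) hRpos hRle
          have hs0 : (0:ℝ) ≤ ∑ j, (‖W j t - Z j t‖^2 + ‖Z j t - W j (t-1)‖^2) := by positivity
          have h2 : ‖g i t - g i (t-1)‖^2 / R
              ≤ (2*(K i:ℝ)^2 / R) * ∑ j, (‖W j t - Z j t‖^2 + ‖Z j t - W j (t-1)‖^2) := by
            rw [div_mul_eq_mul_div]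
            exact (div_le_div_iff_of_pos_right hRpos).mpr hδ
          have h3 : (2*(K i:ℝ)^2 / R) ≤ 1/(32*N) := by
            rw [div_le_div_iff₀ hRpos (by positivity)]
            simp only [hRdef]
            nlinarith [sq_nonneg (K i:ℝ), hN]
          have h4 := mul_le_mul_of_nonneg_right h3 hs0
          linarith [h1, h2, h4]
        have htail : ∑ t ∈ Finset.Ico T₀ (T+1), ‖g i t - g i (t-1)‖^2 / η i t
            ≤ (1/(32*N)) * ∑ t ∈ Finset.Ico T₀ (T+1),
                ∑ j, (‖W j t - Z j t‖^2 + ‖Z j t - W j (t-1)‖^2) := by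
          rw [Finset.mul_sum]
          exact Finset.sum_le_sum htails
        have hmv : ∑ t ∈ Finset.Ico T₀ (T+1), ∑ j, (‖W j t - Z j t‖^2 + ‖Z j t - W j (t-1)‖^2)
            ≤ A T + A T := by
          have hsub : ∑ t ∈ Finset.Ico T₀ (T+1), ∑ j, (‖W j t - Z j t‖^2 + ‖Z j t - W j (t-1)‖^2)
              ≤ ∑ t ∈ Finset.Ico 2 (T+1), ∑ j, (‖W j t - Z j t‖^2 + ‖Z j t - W j (t-1)‖^2) :=
            Finset.sum_le_sum_of_subset_of_nonneg
              (Finset.Ico_subset_Ico hT₀2 le_rfl) (fun u _ _ => by positivity)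
          have hsplit : ∑ t ∈ Finset.Ico 2 (T+1), ∑ j, (‖W j t - Z j t‖^2 + ‖Z j t - W j (t-1)‖^2)
              = ∑ t ∈ Finset.Ico 2 (T+1), ∑ j, ‖W j t - Z j t‖^2
                + ∑ t ∈ Finset.Ico 2 (T+1), ∑ j, ‖Z j t - W j (t-1)‖^2 := by
            rw [← Finset.sum_add_distrib]
            exact Finset.sum_congr rfl (fun t _ => Finset.sum_add_distrib)
          have ha : ∑ t ∈ Finset.Ico 2 (T+1), ∑ j, ‖W j t - Z j t‖^2 ≤ A T := by
            simp only [hAdef]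
            calc ∑ t ∈ Finset.Ico 2 (T+1), ∑ j, ‖W j t - Z j t‖^2
                ≤ ∑ t ∈ Finset.Ico 1 (T+1), ∑ j, ‖W j t - Z j t‖^2 :=
                  Finset.sum_le_sum_of_subset_of_nonneg
                    (Finset.Ico_subset_Ico (by omega) le_rfl) (fun u _ _ => by positivity)
              _ ≤ ∑ t ∈ Finset.Ico 1 (T+1), ∑ j, (‖W j t - Z j t‖^2 + ‖Z j (t+1) - W j t‖^2) :=
                  Finset.sum_le_sum (fun t _ => Finset.sum_le_sum
                    (fun j _ => le_add_of_nonneg_right (by positivity)))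
          have hab := add_le_add ha (hbsum T)
          rw [← hsplit] at hab
          linarith [hsub, hab]
        have hNpos : (0:ℝ) < 32*N := by linarith
        have hfin : (1/(32*N)) * (A T + A T) = A T/(16*N) := by field_simp; ring
        have h5 := mul_le_mul_of_nonneg_left hmv (by positivity : (0:ℝ) ≤ 1/(32*N))
        rw [hfin] at h5
        linarith [hhead, htail, h5]
      · have hsub : ∑ t ∈ Finset.Ico 1 (T+1), ‖g i t - g i (t-1)‖^2 / η i t
            ≤ ∑ t ∈ Finset.Ico 1 T₀, ‖g i t - g i (t-1)‖^2 := by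
          calc ∑ t ∈ Finset.Ico 1 (T+1), ‖g i t - g i (t-1)‖^2 / η i t
              ≤ ∑ t ∈ Finset.Ico 1 (T+1), ‖g i t - g i (t-1)‖^2 :=
                Finset.sum_le_sum (hdiv T)
            _ ≤ ∑ t ∈ Finset.Ico 1 T₀, ‖g i t - g i (t-1)‖^2 :=
                Finset.sum_le_sum_of_subset_of_nonneg
                  (Finset.Ico_subset_Ico le_rfl (by omega)) (fun u _ _ => by positivity)
        linarith [hAdiv T]
  choose M hM0 hMP using hdich
  obtain ⟨Bd, hABd⟩ : ∃ Bd : ℝ, ∀ T, A T ≤ Bd := by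
    refine ⟨8*((∑ i, (h i (xs i) - h i (Z i 1)) * Real.sqrt (1+‖g i 1‖^2))
      + (∑ i, 4*N*(2*(h i (xs i) - h i (Z i 1))*(K i:ℝ))^2) + ∑ i, M i), fun T => ?_⟩
    have hm := master T
    have hsA : Real.sqrt (A T)^2 = A T := Real.sq_sqrt (hA0 T)
    have h1 : ∀ i : ι, (h i (xs i) - h i (Z i 1)) * η i (T+1)
        ≤ (h i (xs i) - h i (Z i 1)) * Real.sqrt (1+‖g i 1‖^2)
          + (4*N*(2*(h i (xs i) - h i (Z i 1))*(K i:ℝ))^2 + A T/(16*N)) := by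
      intro i
      have hB := hetaB i T
      have hmul := mul_le_mul_of_nonneg_left hB (hC0 i)
      have hy := young2 (4*N) (2*(h i (xs i) - h i (Z i 1))*(K i:ℝ)) (Real.sqrt (A T))
        (by linarith)
      rw [hsA, show 4*(4*N) = 16*N by ring] at hy
      nlinarith [hmul, hy]
    have h2 := Finset.sum_le_sum (fun i (_ : i ∈ (Finset.univ : Finset ι)) => h1 i)
    simp only [Finset.sum_add_distrib, Finset.sum_const, Finset.card_univ, nsmul_eq_mul] at h2
    have hNA : (Fintype.card ι : ℝ) * (A T/(16*N)) = A T/16 := by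
      rw [← hNdef]; field_simp
    rw [hNA] at h2
    have h3 : ∑ i, ∑ t ∈ Finset.Ico 1 (T+1), ‖g i t - g i (t-1)‖^2 / η i t
        ≤ ∑ i, M i + A T/16 := by
      have h4 := Finset.sum_le_sum (fun i (_ : i ∈ (Finset.univ : Finset ι)) => hMP i T)
      simp only [Finset.sum_add_distrib, Finset.sum_const, Finset.card_univ,
        nsmul_eq_mul] at h4
      rw [hNA] at h4
      exact h4
    linarith [hm, h2, h3]
  have hBd0 : 0 ≤ Bd := le_trans (hA0 0) (hABd 0)
  have hSfin : ∀ T : ℕ, ∑ t ∈ Finset.Ico 1 (T+1), ‖g i0 t - g i0 (t-1)‖^2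
      ≤ ‖g i0 1‖^2 + 4*(K i0:ℝ)^2*Bd := by
    intro T
    have h1 := hSbound i0 T
    have h2 : 4*(K i0:ℝ)^2 * A T ≤ 4*(K i0:ℝ)^2*Bd :=
      mul_le_mul_of_nonneg_left (hABd T) (by positivity)
    linarith
  have hMinf0 : (0:ℝ) ≤ ‖g i0 1‖^2 + 4*(K i0:ℝ)^2*Bd := by positivity
  have hIco : ∀ n : ℕ, ∑ t ∈ Finset.Ico 1 n, ‖g i0 t - g i0 (t-1)‖^2
      ≤ ‖g i0 1‖^2 + 4*(K i0:ℝ)^2*Bd := by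
    intro n
    cases n with
    | zero => simpa using hMinf0
    | succ m => exact hSfin m
  constructor
  · apply summable_of_sum_range_le (c := ‖g i0 1‖^2 + 4*(K i0:ℝ)^2*Bd)
      (fun n => by positivity)
    intro n
    have : ∑ t ∈ Finset.range n, ‖g i0 t - g i0 (t-1)‖^2
        = ∑ t ∈ Finset.Ico 1 n, ‖g i0 t - g i0 (t-1)‖^2 := by
      cases n with
      | zero => simp
      | succ m =>
        rw [Finset.range_eq_Ico, Finset.sum_eq_sum_Ico_succ_bot (by omega : 0 < m+1)]
        simp [(setup.run i0).g_zero]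
    rw [this]
    exact hIco n
  · refine ⟨⨆ t, η i0 t, tendsto_atTop_ciSup (fun s t hst => etaMonoAll i0 hst)
      ⟨Real.sqrt (1 + (‖g i0 1‖^2 + 4*(K i0:ℝ)^2*Bd)), ?_⟩⟩
    rintro x ⟨t, rfl⟩
    show η i0 t ≤ Real.sqrt (1 + (‖g i0 1‖^2 + 4*(K i0:ℝ)^2*Bd))
    rw [setup.rate i0 t]
    have h1 : adaEta (g i0) t = Real.sqrt (1 + ∑ s ∈ Finset.Ico 1 t, ‖g i0 s - g i0 (s-1)‖^2) := rfl
    rw [h1]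
    exact Real.sqrt_le_sqrt (by linarith [hIco t])
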